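/- Let G be a commutative group, n a positive integer, m₁,…,mₙ: G → ℂ distinct nonzero exponentials, and p₁,…,pₙ: G → ℂ generalized polynomials. If ∑_{i=1}^{n} p_i · m_i is identically zero on G, then each generalized polynomial p_i is identically zero. -/

import Mathlib

/-- `A : G^k → ℂ` is symmetric and `k`-additive on the (multiplicatively written)
commutative group `G`. -/
def IsSymKAdditiveMul (G : Type*) [CommGroup G] (k : ℕ) (A : (Fin k → G) → ℂ) : Prop :=
  (∀ (σ : Equiv.Perm (Fin k)) (x : Fin k → G), A (x ∘ σ) = A x) ∧
  (∀ (x : Fin k → G) (i : Fin k) (y z : G),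
    A (Function.update x i (y * z)) = A (Function.update x i y) + A (Function.update x i z))

/-- `P : G → ℂ` is a generalized polynomial: a finite sum `∑_{k=0}^{l} A_k*` of
diagonalizations of symmetric `k`-additive functions. -/
def IsGenPoly (G : Type*) [CommGroup G] (P : G → ℂ) : Prop :=
  ∃ (l : ℕ) (A : (k : ℕ) → (Fin k → G) → ℂ),
    (∀ k, k ≤ l → IsSymKAdditiveMul G k (A k)) ∧
    ∀ x : G, P x = ∑ k ∈ Finset.range (l + 1), A k (fun _ => x)

set_option linter.unusedSectionVars false

section
variable {G : Type*} [CommGroup G]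

def KAdd (k : ℕ) (A : (Fin k → G) → ℂ) : Prop :=
  ∀ (x : Fin k → G) (i : Fin k) (y z : G),
    A (Function.update x i (y * z)) = A (Function.update x i y) + A (Function.update x i z)

lemma KAdd.zero' (k : ℕ) : KAdd (G := G) k (fun _ => 0) := by intro x i y z; simp

lemma KAdd.upd_mul {k : ℕ} {A : (Fin k → G) → ℂ} (hA : KAdd k A)
    [inst : DecidableEq (Fin k)] (x : Fin k → G) (i : Fin k) (y z : G) :
    A (Function.update x i (y * z)) = A (Function.update x i y) + A (Function.update x i z) := by
  rw [Subsingleton.elim inst (instDecidableEqFin k)]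
  exact hA x i y z

lemma KAdd.update_one {k : ℕ} {A : (Fin k → G) → ℂ} (hA : KAdd k A)
    [inst : DecidableEq (Fin k)] (x : Fin k → G) (i : Fin k) :
    A (Function.update x i 1) = 0 := by
  have := hA.upd_mul x i 1 1
  rw [one_mul] at this
  exact (left_eq_add.mp this)

/-- package a `k`-additive map as an `ℕ`-multilinear map on `Additive G`. -/
def KAdd.toMulti {k : ℕ} {A : (Fin k → G) → ℂ} (hA : KAdd k A) :
    MultilinearMap ℕ (fun _ : Fin k => Additive G) ℂ where
  toFun y := A fun i => Additive.toMul (y i)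
  map_update_add' := by
    intro _ m i a b
    have h : ∀ (v : Additive G), (fun j => Additive.toMul (Function.update m i v j))
        = Function.update (fun j => Additive.toMul (m j)) i (Additive.toMul v) := by
      intro v; funext j
      rcases eq_or_ne j i with h | h
      · subst h; simp
      · simp [Function.update_of_ne h]
    beta_reduce
    rw [h, h, h]
    exact hA.upd_mul _ i _ _
  map_update_smul' := by
    intro _ m i c a
    have h : ∀ (v : Additive G), (fun j => Additive.toMul (Function.update m i v j))
        = Function.update (fun j => Additive.toMul (m j)) i (Additive.toMul v) := by
      intro v; funext j
      rcases eq_or_ne j i with h | h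
      · subst h; simp
      · simp [Function.update_of_ne h]
    beta_reduce
    rw [h, h]
    induction c with
    | zero =>
      simp only [zero_smul, nsmul_eq_mul, Nat.cast_zero, zero_mul]
      have : Additive.toMul (0 : Additive G) = (1 : G) := rfl
      rw [this]
      exact hA.update_one _ i
    | succ n ih =>
      have : Additive.toMul ((n + 1) • a) = Additive.toMul ((n : ℕ) • a) * Additive.toMul a := by
        rw [add_smul, one_smul]; rfl
      rw [this, hA.upd_mul _ i _ _, ih]
      ring

/-- full expansion of a `k`-additive map on a product. -/
lemma KAdd.expand {k : ℕ} {A : (Fin k → G) → ℂ} (hA : KAdd k A) (a b : Fin k → G) :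
    A (fun i => a i * b i) = ∑ s : Finset (Fin k), A (fun i => if i ∈ s then a i else b i) := by
  have h := hA.toMulti.map_add_univ (fun i => Additive.ofMul (a i)) (fun i => Additive.ofMul (b i))
  have h1 : A (fun i => a i * b i) =
      hA.toMulti ((fun i => Additive.ofMul (a i)) + fun i => Additive.ofMul (b i)) := rfl
  rw [h1, h]
  apply Finset.sum_congr rfl
  intro s _
  rfl

/-- degree-bounded generalized polynomial (no symmetry needed). -/
def InP (l : ℕ) (P : G → ℂ) : Prop :=
  ∃ A : (k : ℕ) → (Fin k → G) → ℂ,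
    (∀ k, KAdd k (A k)) ∧ ∀ x : G, P x = ∑ k ∈ Finset.range (l + 1), A k (fun _ => x)

lemma KAdd.add {k : ℕ} {A B : (Fin k → G) → ℂ} (hA : KAdd k A) (hB : KAdd k B) :
    KAdd k (fun x => A x + B x) := by
  intro x i y z; dsimp only; rw [hA x i y z, hB x i y z]; ring

lemma KAdd.smul {k : ℕ} {A : (Fin k → G) → ℂ} (hA : KAdd k A) (c : ℂ) :
    KAdd k (fun x => c * A x) := by
  intro x i y z; dsimp only; rw [hA x i y z]; ring

lemma KAdd.sum {k : ℕ} {ι : Type*} (s : Finset ι) (A : ι → (Fin k → G) → ℂ)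
    (hA : ∀ j ∈ s, KAdd k (A j)) : KAdd k (fun x => ∑ j ∈ s, A j x) := by
  intro x i y z
  dsimp only
  rw [← Finset.sum_add_distrib]
  exact Finset.sum_congr rfl fun j hj => hA j hj x i y z

lemma InP.smul {l : ℕ} {P : G → ℂ} (h : InP l P) (c : ℂ) : InP l (fun x => c * P x) := by
  obtain ⟨A, hA, hP⟩ := h
  exact ⟨fun k => fun y => c * A k y, fun k => (hA k).smul c,
    fun x => by dsimp only; rw [hP x, Finset.mul_sum]⟩

lemma InP.add {l : ℕ} {P Q : G → ℂ} (hP : InP l P) (hQ : InP l Q) :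
    InP l (fun x => P x + Q x) := by
  obtain ⟨A, hA, hPe⟩ := hP
  obtain ⟨B, hB, hQe⟩ := hQ
  exact ⟨fun k => fun y => A k y + B k y, fun k => (hA k).add (hB k),
    fun x => by dsimp only; rw [hPe x, hQe x, Finset.sum_add_distrib]⟩

lemma InP.mono {l l' : ℕ} {P : G → ℂ} (h : InP l P) (hl : l ≤ l') : InP l' P := by
  obtain ⟨A, hA, hP⟩ := h
  refine ⟨fun k => if k ≤ l then A k else fun _ => 0, ?_, ?_⟩
  · intro k
    dsimp only
    split
    · exact hA k
    · exact KAdd.zero' k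
  · intro x
    rw [hP x]
    have h1 : ∀ k ∈ Finset.range (l+1),
        (A k fun _ => x) = (if k ≤ l then A k else fun _ => (0:ℂ)) (fun _ => x) := by
      intro k hk
      rw [if_pos (Nat.lt_succ_iff.mp (Finset.mem_range.mp hk))]
    rw [Finset.sum_congr rfl h1]
    apply Finset.sum_subset (Finset.range_subset_range.2 (by omega))
    intro k _ hk
    have hk' : ¬ k ≤ l := by
      simp only [Finset.mem_range] at hk; omega
    rw [if_neg hk']

lemma InP.const (c : ℂ) : InP (G := G) 0 (fun _ => c) := by
  refine ⟨fun k => if k = 0 then (fun _ => c) else fun _ => 0, ?_, ?_⟩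
  · intro k
    dsimp only
    split
    · rename_i h; subst h; intro x i; exact i.elim0
    · exact KAdd.zero' k
  · intro x; simp

lemma InP.eq_const {P : G → ℂ} (h : InP 0 P) : ∀ x : G, P x = P 1 := by
  obtain ⟨A, _, hP⟩ := h
  intro x
  rw [hP x, hP 1]
  rw [Finset.sum_range_one, Finset.sum_range_one]
  congr 1
  funext i
  exact i.elim0

/-- the coordinate-restriction of `A` to an `s`-indexed family, with `z` elsewhere. -/
def CC {k : ℕ} (A : (Fin k → G) → ℂ) (z : G) (s : Finset (Fin k)) {j : ℕ} (h : s.card = j) :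
    (Fin j → G) → ℂ :=
  fun y => A (fun i => if hi : i ∈ s then y ((s.orderIsoOfFin h).symm ⟨i, hi⟩) else z)

lemma CC_update {k : ℕ} (z : G) (s : Finset (Fin k)) {j : ℕ}
    (h : s.card = j) (y : Fin j → G) (r : Fin j) (v : G) :
    (fun i => if hi : i ∈ s then
        Function.update y r v ((s.orderIsoOfFin h).symm ⟨i, hi⟩) else z)
      = Function.update
        (fun i => if hi : i ∈ s then y ((s.orderIsoOfFin h).symm ⟨i, hi⟩) else z)
        ((s.orderIsoOfFin h r : Fin k)) v := by
  funext i
  by_cases hi : i ∈ s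
  · have hiff : ((s.orderIsoOfFin h).symm ⟨i, hi⟩ = r) ↔ (i = (s.orderIsoOfFin h r : Fin k)) := by
      constructor
      · intro he
        have h2 : (s.orderIsoOfFin h) ((s.orderIsoOfFin h).symm ⟨i, hi⟩)
            = (s.orderIsoOfFin h) r := congrArg _ he
        rw [OrderIso.apply_symm_apply] at h2
        exact congrArg Subtype.val h2
      · intro he
        have h2 : (⟨i, hi⟩ : {a // a ∈ s}) = (s.orderIsoOfFin h) r := Subtype.ext he
        rw [h2, OrderIso.symm_apply_apply]
    simp only [Function.update_apply, dif_pos hi]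
    by_cases hc : i = (s.orderIsoOfFin h r : Fin k)
    · rw [if_pos (hiff.mpr hc), if_pos hc]
    · rw [if_neg (fun hc' => hc (hiff.mp hc')), if_neg hc]
  · have hne : i ≠ (s.orderIsoOfFin h r : Fin k) := by
      intro he
      exact hi (he ▸ (s.orderIsoOfFin h r).2)
    simp only [Function.update_apply, dif_neg hi]
    rw [if_neg hne]

lemma CC_kadd {k : ℕ} {A : (Fin k → G) → ℂ} (hA : KAdd k A) (z : G) (s : Finset (Fin k))
    {j : ℕ} (h : s.card = j) : KAdd j (CC A z s h) := by
  intro y r a b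
  unfold CC
  rw [CC_update z s h y r, CC_update z s h y r, CC_update z s h y r]
  exact hA _ _ a b

lemma CC_diag {k : ℕ} (A : (Fin k → G) → ℂ) (z : G) (s : Finset (Fin k)) {j : ℕ}
    (h : s.card = j) (x : G) :
    CC A z s h (fun _ => x) = A (fun i => if i ∈ s then x else z) := by
  rfl

lemma KAdd.sum' {k : ℕ} {ι : Type*} (s : Finset ι) (A : ι → (Fin k → G) → ℂ)
    (hA : ∀ j ∈ s, KAdd k (A j)) : KAdd k (fun x => ∑ j ∈ s, A j x) := by
  intro x i y z
  dsimp only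
  rw [← Finset.sum_add_distrib]
  exact Finset.sum_congr rfl fun j hj => hA j hj x i y z

/-- degree reduction of the difference operator, one diagonal at a time. -/
lemma KAdd.diff {k : ℕ} {A : (Fin k → G) → ℂ} (hA : KAdd k A) (z : G) :
    ∃ B : (j : ℕ) → (Fin j → G) → ℂ,
      (∀ j, KAdd j (B j)) ∧ (∀ j, k ≤ j → ∀ y, B j y = 0) ∧
      ∀ x : G, A (fun _ => x * z) - A (fun _ => x) = ∑ j ∈ Finset.range k, B j (fun _ => x) := by
  classical
  set E : Finset (Finset (Fin k)) := Finset.univ.erase Finset.univ with hE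
  have hcard : ∀ s ∈ E, s.card < k := by
    intro s hs
    have h1 : s ≠ Finset.univ := (Finset.mem_erase.mp hs).1
    have := Finset.card_lt_card (Finset.ssubset_univ_iff.mpr h1)
    simpa using this
  refine ⟨fun j => fun y => ∑ s ∈ E, if h : s.card = j then CC A z s h y else 0, ?_, ?_, ?_⟩
  · intro j
    apply KAdd.sum'
    intro s _
    by_cases h : s.card = j
    · have : (fun y => if h : s.card = j then CC A z s h y else (0:ℂ))
          = CC A z s h := by
        funext y; rw [dif_pos h]
      rw [this]
      exact CC_kadd hA z s h
    · have : (fun y => if h : s.card = j then CC A z s h y else (0:ℂ))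
          = fun _ => 0 := by
        funext y; rw [dif_neg h]
      rw [this]
      exact KAdd.zero' j
  · intro j hj y
    dsimp only
    apply Finset.sum_eq_zero
    intro s hs
    rw [dif_neg (by have := hcard s hs; omega)]
  · intro x
    have hx : A (fun _ : Fin k => x * z)
        = ∑ s : Finset (Fin k), A (fun i => if i ∈ s then x else z) :=
      hA.expand (fun _ => x) (fun _ => z)
    have huniv : A (fun i : Fin k => if i ∈ Finset.univ then x else z) = A (fun _ => x) := by
      congr 1; funext i; simp
    have hsplit : ∑ s : Finset (Fin k), A (fun i => if i ∈ s then x else z)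
        = (∑ s ∈ E, A (fun i => if i ∈ s then x else z)) + A (fun _ => x) := by
      rw [← huniv, hE]
      exact (Finset.sum_erase_add _ _ (Finset.mem_univ _)).symm
    rw [hx, hsplit]
    rw [add_sub_cancel_right]
    rw [Finset.sum_comm]
    apply Finset.sum_congr rfl
    intro s hs
    rw [Finset.sum_dite_eq (Finset.range k) s.card (fun j h => CC A z s h (fun _ => x))]
    rw [if_pos (Finset.mem_range.mpr (hcard s hs))]
    exact (CC_diag A z s rfl x)

lemma InP.congr {l : ℕ} {P Q : G → ℂ} (h : InP l P) (he : ∀ x, Q x = P x) : InP l Q := by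
  obtain ⟨A, hA, hP⟩ := h
  exact ⟨A, hA, fun x => (he x).trans (hP x)⟩

lemma InP.diff {l : ℕ} {P : G → ℂ} (h : InP (l+1) P) (z : G) :
    InP l (fun x => P (x * z) - P x) := by
  obtain ⟨A, hA, hP⟩ := h
  choose B hB1 hB2 hB3 using fun k => (hA k).diff z
  refine ⟨fun j => fun y => ∑ k ∈ Finset.range (l+2), B k j y,
    fun j => KAdd.sum' _ _ (fun k _ => hB1 k j), ?_⟩
  intro x
  dsimp only
  have step1 : P (x*z) - P x
      = ∑ k ∈ Finset.range (l+2), (A k (fun _ => x*z) - A k (fun _ => x)) := by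
    rw [hP, hP, Finset.sum_sub_distrib]
  have step2 : ∀ k ∈ Finset.range (l+2),
      A k (fun _ => x*z) - A k (fun _ => x) = ∑ j ∈ Finset.range (l+1), B k j (fun _ => x) := by
    intro k hk
    rw [hB3 k x]
    apply Finset.sum_subset (Finset.range_subset_range.2
      (Nat.lt_succ_iff.mp (Finset.mem_range.mp hk)))
    intro j _ hj
    exact hB2 k j (by simp only [Finset.mem_range] at hj; omega) _
  rw [step1, Finset.sum_congr rfl step2, Finset.sum_comm]

lemma InP.translate {l : ℕ} {P : G → ℂ} (h : InP l P) (y : G) :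
    InP l (fun x => P (x * y)) := by
  cases l with
  | zero =>
    exact (InP.const (P 1)).congr (fun x => (h.eq_const (x * y)))
  | succ l =>
    have h1 := (h.diff y).mono (Nat.le_succ l)
    exact (h.add h1).congr (fun x => by ring)

/-- eigenfunction of the difference operator with nonzero eigenvalue vanishes. -/
lemma InP.eigen {P : G → ℂ} {c : ℂ} {z : G} (hc : c ≠ 0) :
    ∀ l, InP l P → (∀ x, P (x * z) - P x = c * P x) → ∀ x, P x = 0 := by
  intro l
  induction l generalizing P with
  | zero =>
    intro h he x
    have h1 := he x
    rw [h.eq_const (x * z), h.eq_const x] at h1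
    have h2 : c * P 1 = 0 := by linear_combination -h1
    have h3 : P 1 = 0 := (mul_eq_zero.mp h2).resolve_left hc
    rw [h.eq_const x, h3]
  | succ l ih =>
    intro h he x
    have hQ : InP l (fun x => c * P x) := (h.diff z).congr (fun x => (he x).symm)
    have heQ : ∀ x : G, (fun x => c * P x) (x * z) - (fun x => c * P x) x
        = c * ((fun x => c * P x) x) := by
      intro x
      show c * P (x * z) - c * P x = c * (c * P x)
      rw [← mul_sub, he x]
    have h0 : (fun x => c * P x) x = 0 := ih hQ heQ x
    have h0' : c * P x = 0 := h0
    exact (mul_eq_zero.mp h0').resolve_left hc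

/-- a nonzero exponential never vanishes. -/
lemma exp_ne_zero {m : G → ℂ} (hexp : ∀ x y : G, m (x * y) = m x * m y)
    (hnz : m ≠ 0) : ∀ x, m x ≠ 0 := by
  have hone : m 1 = 1 := by
    obtain ⟨x0, hx0⟩ : ∃ x0, m x0 ≠ 0 := by
      by_contra h
      push_neg at h
      exact hnz (funext h)
    have := hexp x0 1
    rw [mul_one] at this
    have h2 : m x0 * 1 = m x0 * m 1 := by rw [mul_one]; exact this
    exact (mul_left_cancel₀ hx0 h2).symm
  intro x hx
  have h4 := hexp x x⁻¹
  have h5 : x * x⁻¹ = (1:G) := by group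
  rw [h5, hone, hx, zero_mul] at h4
  exact one_ne_zero h4

/-- main induction. -/
lemma main_induction : ∀ (n : ℕ) (m : Fin n → G → ℂ),
    (∀ i, ∀ x y : G, m i (x * y) = m i x * m i y) →
    (∀ i, m i ≠ 0) →
    (∀ i j, i ≠ j → m i ≠ m j) →
    ∀ (p : Fin n → G → ℂ),
    (∀ i, ∃ l, InP l (p i)) →
    (∀ x : G, ∑ i, p i x * m i x = 0) →
    ∀ (i : Fin n) (x : G), p i x = 0 := by
  intro n
  induction n with
  | zero => intro _ _ _ _ _ _ _ i; exact i.elim0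
  | succ n IH =>
    intro m hexp hnz hdist p hpoly hsum
    -- inner induction on the degree of the last polynomial
    suffices H : ∀ (l : ℕ) (p : Fin (n+1) → G → ℂ),
        (∀ i, ∃ l', InP l' (p i)) → InP l (p (Fin.last n)) →
        (∀ x : G, ∑ i, p i x * m i x = 0) → ∀ i x, p i x = 0 by
      obtain ⟨l, hl⟩ := hpoly (Fin.last n)
      exact H l p hpoly hl hsum
    intro l
    induction l with
    | zero =>
      intro p hpoly hlast hsum
      -- p last is the constant c
      have hconst := hlast.eq_const
      -- the auxiliary polynomials
      have hq : ∀ y : G, ∀ (i : Fin n) (x : G),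
          m (i.castSucc) y * p (i.castSucc) (x * y)
            - m (Fin.last n) y * p (i.castSucc) x = 0 := by
        intro y
        set q : Fin (n+1) → G → ℂ :=
          fun i x => m i y * p i (x * y) - m (Fin.last n) y * p i x with hqdef
        have hqsum : ∀ x : G, ∑ i, q i x * m i x = 0 := by
          intro x
          have e1 : ∑ i, q i x * m i x
              = (∑ i, p i (x*y) * m i (x*y)) - m (Fin.last n) y * ∑ i, p i x * m i x := by
            rw [Finset.mul_sum, ← Finset.sum_sub_distrib]
            apply Finset.sum_congr rfl
            intro i _
            rw [hqdef]
            dsimp only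
            rw [hexp i x y]
            ring
          rw [e1, hsum, hsum]
          ring
        have hqlast : ∀ x, q (Fin.last n) x = 0 := by
          intro x
          rw [hqdef]
          dsimp only
          rw [hconst (x * y), hconst x]
          ring
        have hqsum' : ∀ x : G, ∑ i : Fin n, q (i.castSucc) x * m (i.castSucc) x = 0 := by
          intro x
          have := hqsum x
          rw [Fin.sum_univ_castSucc] at this
          rw [hqlast x, zero_mul, add_zero] at this
          exact this
        have hqpoly : ∀ i : Fin n, ∃ l', InP l' (q (i.castSucc)) := by
          intro i
          obtain ⟨l', hl'⟩ := hpoly (i.castSucc)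
          refine ⟨l', ?_⟩
          have h1 := (hl'.translate y).smul (m (i.castSucc) y)
          have h2 := hl'.smul (-(m (Fin.last n) y))
          exact (h1.add h2).congr (fun x => by rw [hqdef]; dsimp only; ring)
        have := IH (fun i => m (i.castSucc)) (fun i => hexp (i.castSucc))
          (fun i => hnz (i.castSucc))
          (fun i j hij => hdist (i.castSucc) (j.castSucc)
            (fun h => hij (Fin.castSucc_injective n h)))
          (fun i => q (i.castSucc)) hqpoly hqsum'
        intro i x
        exact this i x
      -- now each p i, i ≠ last, is an eigenfunction of a difference operator
      have hzero : ∀ (i : Fin n) (x : G), p (i.castSucc) x = 0 := by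
        intro i
        have hneq : m (i.castSucc) ≠ m (Fin.last n) :=
          hdist _ _ (Fin.ne_last_of_lt (Fin.castSucc_lt_last i))
        obtain ⟨z, hz⟩ : ∃ z, m (i.castSucc) z ≠ m (Fin.last n) z := by
          by_contra h
          push_neg at h
          exact hneq (funext h)
        have hmz : m (i.castSucc) z ≠ 0 := exp_ne_zero (hexp _) (hnz _) z
        set c : ℂ := m (Fin.last n) z / m (i.castSucc) z - 1 with hcdef
        have hc : c ≠ 0 := by
          rw [hcdef]
          intro h
          apply hz
          have : m (Fin.last n) z / m (i.castSucc) z = 1 := by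
            have := sub_eq_zero.mp h
            linear_combination this
          field_simp at this
          exact this.symm
        have heig : ∀ x, p (i.castSucc) (x * z) - p (i.castSucc) x
            = c * p (i.castSucc) x := by
          intro x
          have h1 := hq z i x
          have h2 : p (i.castSucc) (x * z)
              = (m (Fin.last n) z / m (i.castSucc) z) * p (i.castSucc) x := by
            field_simp
            linear_combination h1
          rw [h2, hcdef]
          ring
        obtain ⟨l', hl'⟩ := hpoly (i.castSucc)
        exact InP.eigen hc l' hl' heig
      -- conclude for the last one
      have hlastzero : ∀ x, p (Fin.last n) x = 0 := by
        intro x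
        have := hsum x
        rw [Fin.sum_univ_castSucc] at this
        have hz : ∑ i : Fin n, p (i.castSucc) x * m (i.castSucc) x = 0 := by
          apply Finset.sum_eq_zero
          intro i _
          rw [hzero i x, zero_mul]
        rw [hz, zero_add] at this
        exact (mul_eq_zero.mp this).resolve_right (exp_ne_zero (hexp _) (hnz _) x)
      intro i x
      rcases Fin.eq_castSucc_or_eq_last i with ⟨j, hj⟩ | hj
      · rw [hj]; exact hzero j x
      · rw [hj]; exact hlastzero x
    | succ l ihl =>
      intro p hpoly hlast hsum
      -- first show p last is constant
      have hconst : ∀ x, p (Fin.last n) x = p (Fin.last n) 1 := by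
        have key : ∀ y x : G, p (Fin.last n) (x * y) = p (Fin.last n) x := by
          intro y x
          set q : Fin (n+1) → G → ℂ :=
            fun i x => m i y * p i (x * y) - m (Fin.last n) y * p i x with hqdef
        -- q's sum vanishes
          have hqsum : ∀ x : G, ∑ i, q i x * m i x = 0 := by
            intro x
            have e1 : ∑ i, q i x * m i x
                = (∑ i, p i (x*y) * m i (x*y)) - m (Fin.last n) y * ∑ i, p i x * m i x := by
              rw [Finset.mul_sum, ← Finset.sum_sub_distrib]
              apply Finset.sum_congr rfl
              intro i _
              rw [hqdef]
              dsimp only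
              rw [hexp i x y]
              ring
            rw [e1, hsum, hsum]
            ring
          have hqpoly : ∀ i : Fin (n+1), ∃ l', InP l' (q i) := by
            intro i
            obtain ⟨l', hl'⟩ := hpoly i
            refine ⟨l', ?_⟩
            have h1 := (hl'.translate y).smul (m i y)
            have h2 := hl'.smul (-(m (Fin.last n) y))
            exact (h1.add h2).congr (fun x => by rw [hqdef]; dsimp only; ring)
          have hqlast : InP l (q (Fin.last n)) := by
            have h1 := (hlast.diff y).smul (m (Fin.last n) y)
            exact h1.congr (fun x => by rw [hqdef]; dsimp only; ring)
          have hq0 := ihl q hqpoly hqlast hqsum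
          have := hq0 (Fin.last n) x
          rw [hqdef] at this
          dsimp only at this
          have hmy : m (Fin.last n) y ≠ 0 := exp_ne_zero (hexp _) (hnz _) y
          have h2 : m (Fin.last n) y * (p (Fin.last n) (x * y) - p (Fin.last n) x) = 0 := by
            linear_combination this
          have h3 := (mul_eq_zero.mp h2).resolve_left hmy
          linear_combination h3
        intro x
        have := key x 1
        rw [one_mul] at this
        exact this
      have hlast0 : InP l (p (Fin.last n)) :=
        ((InP.const (p (Fin.last n) 1)).congr hconst).mono (Nat.zero_le l)
      exact ihl p hpoly hlast0 hsum

end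

/-- **Lemma 4.3 of Székelyhidi.**
Let `G` be a commutative group, `n` a positive integer, `m₁,…,mₙ : G → ℂ` distinct nonzero
exponentials and `p₁,…,pₙ : G → ℂ` generalized polynomials.  If `∑ i, p i * m i` is
identically zero, then each `p i` is identically zero. -/
theorem exponential_polynomials_independent
    {G : Type*} [CommGroup G] (n : ℕ) (hn : 0 < n)
    (m : Fin n → G → ℂ)
    (hexp : ∀ i, ∀ x y : G, m i (x * y) = m i x * m i y)
    (hnz : ∀ i, m i ≠ 0)
    (hdist : ∀ i j, i ≠ j → m i ≠ m j)
    (p : Fin n → G → ℂ)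
    (hpoly : ∀ i, IsGenPoly G (p i))
    (hsum : ∀ x : G, ∑ i, p i x * m i x = 0) :
    ∀ (i : Fin n) (x : G), p i x = 0 := by
  apply main_induction n m hexp hnz hdist p _ hsum
  intro i
  obtain ⟨l, A, hA, hP⟩ := hpoly i
  refine ⟨l, fun k => if h : k ≤ l then A k else fun _ => 0, ?_, ?_⟩
  · intro k
    by_cases h : k ≤ l
    · simp only [dif_pos h]
      exact (hA k h).2
    · simp only [dif_neg h]
      exact KAdd.zero' k
  · intro x
    rw [hP x]
    apply Finset.sum_congr rfl
    intro k hk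
    have hkl : k ≤ l := Nat.lt_succ_iff.mp (Finset.mem_range.mp hk)
    dsimp only
    rw [dif_pos hkl]
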